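/- Let X be a first countable T0 space. Then every irreducible closed subset of X is a well-filtered determined (WD) set (equivalently, the well-filterification of X coincides with the sobrification of X). -/
import Mathlib


/-- The specialization order of a topological space: `x ≤ y` iff `x ∈ cl {y}`. -/
def SpecLE {X : Type*} [TopologicalSpace X] (x y : X) : Prop := x ∈ closure ({y} : Set X)

/-- A subset is directed (w.r.t. the specialization order) if it is nonempty and
every pair of its elements has an upper bound in it. -/
def DirectedSubset {X : Type*} [TopologicalSpace X] (D : Set X) : Prop :=
  D.Nonempty ∧ ∀ x ∈ D, ∀ y ∈ D, ∃ z ∈ D, SpecLE x z ∧ SpecLE y z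

/-- `↓A` with respect to the specialization order. -/
def SpecLower {X : Type*} [TopologicalSpace X] (A : Set X) : Set X :=
  {x | ∃ a ∈ A, SpecLE x a}

/-- Saturated = upper set in the specialization order. -/
def SatUpper {X : Type*} [TopologicalSpace X] (K : Set X) : Prop :=
  ∀ x ∈ K, ∀ y, SpecLE x y → y ∈ K

/-- A family of sets is filtered. -/
def FilteredFam {X : Type*} (𝒦 : Set (Set X)) : Prop :=
  ∀ K₁ ∈ 𝒦, ∀ K₂ ∈ 𝒦, ∃ K₃ ∈ 𝒦, K₃ ⊆ K₁ ∩ K₂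

/-- `A` is a KF-set: there is a nonempty filtered family `𝒦` of compact saturated sets such
that `cl A` is a minimal closed set intersecting all members of `𝒦`. -/
def IsKFSet {X : Type*} [TopologicalSpace X] (A : Set X) : Prop :=
  A.Nonempty ∧ ∃ 𝒦 : Set (Set X), 𝒦.Nonempty ∧ (∀ K ∈ 𝒦, IsCompact K ∧ SatUpper K) ∧
    FilteredFam 𝒦 ∧ (∀ K ∈ 𝒦, (closure A ∩ K).Nonempty) ∧
    (∀ C : Set X, IsClosed C → C ⊆ closure A → (∀ K ∈ 𝒦, (C ∩ K).Nonempty) → C = closure A)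


/-- An irreducible closed set. -/
def IrredClosed {X : Type*} [TopologicalSpace X] (A : Set X) : Prop :=
  IsClosed A ∧ A.Nonempty ∧
    ∀ B C : Set X, IsClosed B → IsClosed C → A ⊆ B ∪ C → A ⊆ B ∨ A ⊆ C

/-- A well-filtered space: for every nonempty filtered family of compact saturated sets and
every open set containing its intersection, some member of the family is contained in the
open set. -/
def WellFiltered (Y : Type*) [TopologicalSpace Y] : Prop :=
  ∀ 𝒦 : Set (Set Y), 𝒦.Nonempty → (∀ K ∈ 𝒦, IsCompact K ∧ SatUpper K) → FilteredFam 𝒦 →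
    ∀ U : Set Y, IsOpen U → ⋂₀ 𝒦 ⊆ U → ∃ K ∈ 𝒦, K ⊆ U

/-- A well-filtered determined (WD) subset of `X`: every continuous map to a well-filtered
`T₀` space sends it to the closure of a unique point. -/
def IsWDSet {X : Type*} [TopologicalSpace X] (A : Set X) : Prop :=
  ∀ (Y : Type*) [TopologicalSpace Y] [T0Space Y], WellFiltered Y →
    ∀ f : X → Y, Continuous f → ∃ y : Y, closure (f '' A) = closure ({y} : Set Y)

/-! ### Auxiliary machinery -/

section WDProofAux

open Filter Topology Set

variable {α : Type*} [TopologicalSpace α]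

lemma WD_specLE_refl (x : α) : SpecLE x x := subset_closure rfl

lemma WD_specLE_trans {x y w : α} (h1 : SpecLE x y) (h2 : SpecLE y w) : SpecLE x w :=
  closure_minimal (Set.singleton_subset_iff.mpr h2) isClosed_closure h1

lemma WD_specLE_mem_open {x y : α} {U : Set α} (h : SpecLE x y) (hU : IsOpen U) (hx : x ∈ U) :
    y ∈ U := by
  rcases mem_closure_iff.mp h U hU hx with ⟨t, htU, hty⟩
  have ht : t = y := hty
  rwa [ht] at htU

/-- The saturation (upper closure) of a set. -/
def WDup (S : Set α) : Set α := {y | ∃ x ∈ S, SpecLE x y}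

lemma WD_subset_up (S : Set α) : S ⊆ WDup S := fun x hx => ⟨x, hx, WD_specLE_refl x⟩

lemma WD_satUpper_up (S : Set α) : SatUpper (WDup S) := by
  rintro x ⟨a, ha, hax⟩ y hxy
  exact ⟨a, ha, WD_specLE_trans hax hxy⟩

lemma WD_up_mono {S T : Set α} (h : S ⊆ T) : WDup S ⊆ WDup T := by
  rintro x ⟨a, ha, hax⟩; exact ⟨a, h ha, hax⟩

lemma WD_isCompact_up {S : Set α} (hS : IsCompact S) : IsCompact (WDup S) := by
  refine isCompact_of_finite_subcover fun U hU hcov => ?_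
  obtain ⟨t, ht⟩ := hS.elim_finite_subcover U hU ((WD_subset_up S).trans hcov)
  refine ⟨t, fun y hy => ?_⟩
  obtain ⟨a, ha, hay⟩ := hy
  rcases Set.mem_iUnion₂.mp (ht ha) with ⟨i, hi, hai⟩
  exact Set.mem_iUnion₂.mpr ⟨i, hi, WD_specLE_mem_open hay (hU i) hai⟩

/-- In a well-filtered space, a closed set meeting every member of a filtered family of
compact saturated sets meets the intersection of the family. -/
lemma WD_wf_meet {Y : Type*} [TopologicalSpace Y] (hY : WellFiltered Y)
    {𝒦 : Set (Set Y)} (hne : 𝒦.Nonempty) (hcs : ∀ K ∈ 𝒦, IsCompact K ∧ SatUpper K)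
    (hfil : FilteredFam 𝒦) {E : Set Y} (hE : IsClosed E)
    (hmeet : ∀ K ∈ 𝒦, (K ∩ E).Nonempty) : (E ∩ ⋂₀ 𝒦).Nonempty := by
  by_contra hcon
  have hsub : ⋂₀ 𝒦 ⊆ Eᶜ := fun x hx hxE => hcon ⟨x, hxE, hx⟩
  obtain ⟨K, hK, hKE⟩ := hY 𝒦 hne hcs hfil Eᶜ hE.isOpen_compl hsub
  obtain ⟨x, hxK, hxE⟩ := hmeet K hK
  exact hKE hxK hxE

/-- Recursive construction: `WDg d pick n` records the first `n` values of a sequence built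
by successively applying the choice function `pick` to the previously built values. -/
def WDg {β : Type*} (d : β) (pick : ℕ → (ℕ → β) → β) : ℕ → ℕ → β
  | 0 => fun _ => d
  | n+1 => fun m => if m = n then pick n (WDg d pick n) else WDg d pick n m

/-- The diagonal sequence of the recursive construction. -/
def WDz {β : Type*} (d : β) (pick : ℕ → (ℕ → β) → β) (n : ℕ) : β := WDg d pick (n+1) n

lemma WDg_stab {β : Type*} (d : β) (pick : ℕ → (ℕ → β) → β) {m n : ℕ} (hmn : m < n) :
    ∀ k, n ≤ k → WDg d pick k m = WDg d pick n m := by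
  intro k hk
  induction k, hk using Nat.le_induction with
  | base => rfl
  | succ k hk ih =>
    have hne : m ≠ k := by omega
    calc WDg d pick (k+1) m = WDg d pick k m := if_neg hne
    _ = WDg d pick n m := ih

lemma WDz_eq {β : Type*} (d : β) (pick : ℕ → (ℕ → β) → β) (n : ℕ) :
    WDz d pick n = pick n (WDg d pick n) := if_pos rfl

lemma WDg_lt {β : Type*} (d : β) (pick : ℕ → (ℕ → β) → β) {j n : ℕ} (h : j < n) :
    WDg d pick n j = WDz d pick j :=
  WDg_stab d pick (Nat.lt_succ_self j) n h

end WDProofAux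

/-- in a first countable `T₀` space, every irreducible closed set is a
well-filtered determined set. -/
theorem first_countable_irred_WD {X : Type*} [TopologicalSpace X] [T0Space X]
    [FirstCountableTopology X] :
    ∀ A : Set X, IrredClosed A → IsWDSet A := by
  classical
  intro A hA
  obtain ⟨hAcl, hAne, hAirr⟩ := hA
  intro Y _tY _t0 hY f hf
  -- countable antitone open neighborhood bases
  have hxb : ∀ x : X, ∃ u : ℕ → Set X, (nhds x).HasAntitoneBasis u := fun x =>
    Filter.exists_antitone_basis (nhds x)
  choose u hu using hxb
  set V : ℕ → X → Set X := fun n x => if x ∈ A then interior (u x n) else Set.univ with hVdef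
  have hVopen : ∀ n x, IsOpen (V n x) := by
    intro n x
    by_cases h : x ∈ A <;> simp [hVdef, h, isOpen_interior]
  have hVmem : ∀ n x, x ∈ A → x ∈ V n x := by
    intro n x h
    simp only [hVdef, if_pos h]
    exact mem_interior_iff_mem_nhds.mpr ((hu x).toHasBasis.mem_of_mem trivial)
  have hVA : ∀ n x, (V n x ∩ A).Nonempty := by
    intro n x
    by_cases h : x ∈ A
    · exact ⟨x, hVmem n x h, h⟩
    · simpa [hVdef, h] using hAne
  have hVanti : ∀ x, x ∈ A → ∀ k m : ℕ, k ≤ m → V m x ⊆ V k x := by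
    intro x hx k m hkm
    simp only [hVdef, if_pos hx]
    exact interior_mono ((hu x).antitone hkm)
  have hVsub : ∀ x, x ∈ A → ∀ k, V k x ⊆ u x k := by
    intro x hx k
    simp only [hVdef, if_pos hx]
    exact interior_subset
  -- irreducibility: finite intersections of opens meeting A meet A
  have hpair : ∀ U W : Set X, IsOpen U → IsOpen W → (U ∩ A).Nonempty → (W ∩ A).Nonempty →
      ((U ∩ W) ∩ A).Nonempty := by
    intro U W hU hW h1 h2
    by_contra hcon
    have hsub : A ⊆ Uᶜ ∪ Wᶜ := by
      intro x hx
      by_contra hx'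
      rw [Set.mem_union, Set.mem_compl_iff, Set.mem_compl_iff] at hx'
      push_neg at hx'
      exact hcon ⟨x, ⟨hx'.1, hx'.2⟩, hx⟩
    rcases hAirr Uᶜ Wᶜ (isClosed_compl_iff.mpr hU) (isClosed_compl_iff.mpr hW) hsub with h | h
    · obtain ⟨x, hxU, hxA⟩ := h1
      exact (h hxA) hxU
    · obtain ⟨x, hxW, hxA⟩ := h2
      exact (h hxA) hxW
  have hfin : ∀ (n : ℕ) (G : ℕ → Set X), (∀ i, IsOpen (G i)) → (∀ i, (G i ∩ A).Nonempty) →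
      ((⋂ i ∈ Finset.range n, G i) ∩ A).Nonempty := by
    intro n
    induction n with
    | zero => intro G _ _; simpa using hAne
    | succ n ih =>
      intro G hG hGA
      have h1 := ih G hG hGA
      have h2 := hpair _ _ (isOpen_biInter_finset fun i _ => hG i) (hG n) h1 (hGA n)
      obtain ⟨x, ⟨hx1, hx2⟩, hxA⟩ := h2
      refine ⟨x, ?_, hxA⟩
      rw [Finset.range_add_one, Finset.set_biInter_insert]
      exact ⟨hx2, hx1⟩
  set d0 : X := hAne.choose with hd0
  have hd0A : d0 ∈ A := hAne.choose_spec
  -- KEY STEP: for every countable seed in A there is a "generic point over the seed"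
  have key : ∀ s : ℕ → X, (∀ i, s i ∈ A) →
      ∃ y : Y, ∃ zz : ℕ → X, ((∀ n, zz n ∈ A) ∧
        closure (f '' closure (Set.range zz)) = closure ({y} : Set Y)) ∧
        ∀ i, SpecLE (f (s i)) y := by
    intro s hs
    have hex : ∀ (n : ℕ) (w : ℕ → X),
        ∃ x, x ∈ (⋂ i ∈ Finset.range (n+1), (V n (s i) ∩ V n (w i))) ∩ A := by
      intro n w
      exact hfin (n+1) _ (fun i => (hVopen n (s i)).inter (hVopen n (w i)))
        (fun i => hpair _ _ (hVopen n (s i)) (hVopen n (w i)) (hVA n (s i)) (hVA n (w i)))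
    choose pick hpick using hex
    set z : ℕ → X := WDz d0 pick with hzdef
    have hzspec : ∀ n, z n ∈
        (⋂ i ∈ Finset.range (n+1), (V n (s i) ∩ V n (WDg d0 pick n i))) ∩ A := by
      intro n
      have hzn : z n = pick n (WDg d0 pick n) := WDz_eq d0 pick n
      rw [hzn]
      exact hpick n _
    have hzA : ∀ n, z n ∈ A := fun n => (hzspec n).2
    have hzs : ∀ i n, i ≤ n → z n ∈ V n (s i) := by
      intro i n hin
      exact (Set.mem_iInter₂.mp (hzspec n).1 i (Finset.mem_range.mpr (by omega))).1
    have hzz : ∀ j n, j < n → z n ∈ V n (z j) := by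
      intro j n hjn
      have h := (Set.mem_iInter₂.mp (hzspec n).1 j (Finset.mem_range.mpr (by omega))).2
      rwa [WDg_lt d0 pick hjn] at h
    -- convergence of z to every seed point and to every term of z
    have hconv : ∀ w, w ∈ A → ∀ N : ℕ, (∀ m, N ≤ m → z m ∈ V m w) →
        Filter.Tendsto z Filter.atTop (nhds w) := by
      intro w hw N hN
      rw [(hu w).toHasBasis.tendsto_right_iff]
      intro k _
      filter_upwards [Filter.eventually_ge_atTop (max N k)] with m hm
      exact hVsub w hw k (hVanti w hw k m (le_trans (le_max_right _ _) hm)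
        (hN m (le_trans (le_max_left _ _) hm)))
    have hconvs : ∀ i, Filter.Tendsto z Filter.atTop (nhds (s i)) := fun i =>
      hconv _ (hs i) i (fun m hm => hzs i m hm)
    have hconvz : ∀ j, Filter.Tendsto z Filter.atTop (nhds (z j)) := fun j =>
      hconv _ (hzA j) (j+1) (fun m hm => hzz j m (by omega))
    -- tails of z are compact
    have htail : ∀ m : ℕ, IsCompact (Set.range fun k => z (k + m)) := by
      intro m
      have ht : Filter.Tendsto (fun k => z (k + m)) Filter.atTop (nhds (z m)) :=
        (hconvz m).comp (Filter.tendsto_add_atTop_nat m)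
      have h2 := ht.isCompact_insert_range
      have hmem : z m ∈ Set.range (fun k => z (k + m)) := ⟨0, by simp⟩
      rwa [Set.insert_eq_self.mpr hmem] at h2
    set Kf : ℕ → Set Y := fun m => WDup (f '' (Set.range fun k => z (k + m))) with hKf
    have hKc : ∀ m, IsCompact (Kf m) ∧ SatUpper (Kf m) := fun m =>
      ⟨WD_isCompact_up ((htail m).image hf), WD_satUpper_up _⟩
    have hKmono : ∀ m1 m2 : ℕ, m1 ≤ m2 → Kf m2 ⊆ Kf m1 := by
      intro m1 m2 h
      apply WD_up_mono
      apply Set.image_mono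
      rintro x ⟨k, rfl⟩
      have harith : k + (m2 - m1) + m1 = k + m2 := by omega
      exact ⟨k + (m2 - m1), by show z (k + (m2 - m1) + m1) = z (k + m2); rw [harith]⟩
    have hfil : FilteredFam (Set.range Kf) := by
      rintro K1 ⟨m1, rfl⟩ K2 ⟨m2, rfl⟩
      exact ⟨Kf (max m1 m2), ⟨max m1 m2, rfl⟩,
        Set.subset_inter (hKmono _ _ (le_max_left _ _)) (hKmono _ _ (le_max_right _ _))⟩
    have hmeet : ∀ K ∈ Set.range Kf, (K ∩ closure (f '' closure (Set.range z))).Nonempty := by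
      rintro K ⟨m, rfl⟩
      refine ⟨f (z m), WD_subset_up _ ?_, subset_closure ⟨z m, subset_closure ⟨m, rfl⟩, rfl⟩⟩
      exact ⟨z m, ⟨0, by simp⟩, rfl⟩
    obtain ⟨y, hyE, hyI⟩ := WD_wf_meet (𝒦 := Set.range Kf) hY ⟨Kf 0, ⟨0, rfl⟩⟩
      (by rintro K ⟨m, rfl⟩; exact hKc m) hfil isClosed_closure hmeet
    have hyK : ∀ m : ℕ, ∃ k, SpecLE (f (z (k + m))) y := by
      intro m
      have h := Set.mem_sInter.mp hyI (Kf m) ⟨m, rfl⟩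
      obtain ⟨w, hwm, hwy⟩ := h
      obtain ⟨x, ⟨k, rfl⟩, rfl⟩ := hwm
      exact ⟨k, hwy⟩
    have hCcl : IsClosed (f ⁻¹' closure ({y} : Set Y)) := isClosed_closure.preimage hf
    have hlim : ∀ w : X, Filter.Tendsto z Filter.atTop (nhds w) →
        f w ∈ closure ({y} : Set Y) := by
      intro w hw
      by_contra hwC
      have hev : ∀ᶠ n in Filter.atTop, z n ∈ (f ⁻¹' closure ({y} : Set Y))ᶜ :=
        hw (hCcl.isOpen_compl.mem_nhds hwC)
      obtain ⟨N, hN⟩ := Filter.eventually_atTop.mp hev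
      obtain ⟨k, hk⟩ := hyK N
      exact hN (k + N) (by omega) hk
    have hzC : Set.range z ⊆ f ⁻¹' closure ({y} : Set Y) := by
      rintro x ⟨j, rfl⟩
      exact hlim _ (hconvz j)
    have hE1y : closure (f '' closure (Set.range z)) = closure ({y} : Set Y) := by
      apply subset_antisymm
      · exact closure_minimal (Set.image_subset_iff.mpr (closure_minimal hzC hCcl))
          isClosed_closure
      · exact closure_minimal (Set.singleton_subset_iff.mpr hyE) isClosed_closure
    exact ⟨y, z, ⟨hzA, hE1y⟩, fun i => hlim _ (hconvs i)⟩
  -- the set of generic points obtained from countable seeds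
  set D : Set Y := {y | ∃ zz : ℕ → X, (∀ n, zz n ∈ A) ∧
    closure (f '' closure (Set.range zz)) = closure ({y} : Set Y)} with hD
  have hDB : ∀ y ∈ D, y ∈ closure (f '' A) := by
    rintro y ⟨zz, hzzA, hzzE⟩
    have h1 : closure (f '' closure (Set.range zz)) ⊆ closure (f '' A) := by
      apply closure_mono
      apply Set.image_mono
      exact closure_minimal (fun x hx => by obtain ⟨j, hj⟩ := hx; exact hj ▸ hzzA j) hAcl
    have h2 : y ∈ closure (f '' closure (Set.range zz)) := by
      rw [hzzE]; exact subset_closure rfl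
    exact h1 h2
  have hseed : ∀ (zz : ℕ → X), ∀ (y3 : Y), (∀ i, SpecLE (f (zz i)) y3) →
      ∀ y1 : Y, closure (f '' closure (Set.range zz)) = closure ({y1} : Set Y) →
      SpecLE y1 y3 := by
    intro zz y3 h3 y1 h1
    have hr : Set.range zz ⊆ f ⁻¹' closure ({y3} : Set Y) := by
      rintro x ⟨j, rfl⟩; exact h3 j
    have hcl : closure (f '' closure (Set.range zz)) ⊆ closure ({y3} : Set Y) :=
      closure_minimal (Set.image_subset_iff.mpr
        (closure_minimal hr (isClosed_closure.preimage hf))) isClosed_closure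
    rw [h1] at hcl
    exact hcl (WD_specLE_refl y1)
  have hDdir : ∀ y1 ∈ D, ∀ y2 ∈ D, ∃ y3 ∈ D, SpecLE y1 y3 ∧ SpecLE y2 y3 := by
    rintro y1 ⟨z1, hz1A, hz1E⟩ y2 ⟨z2, hz2A, hz2E⟩
    set s : ℕ → X := fun n => if Even n then z1 (n / 2) else z2 (n / 2) with hs
    have hsA : ∀ i, s i ∈ A := by
      intro i
      by_cases h : Even i
      · simpa [hs, h] using hz1A (i / 2)
      · simpa [hs, h] using hz2A (i / 2)
    obtain ⟨y3, z3, ⟨hz3A, hz3E⟩, hspec⟩ := key s hsA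
    have hsub1 : ∀ j, SpecLE (f (z1 j)) y3 := by
      intro j
      have h := hspec (2 * j)
      have hsj : s (2 * j) = z1 j := by
        simp only [hs]
        rw [if_pos (even_two_mul j)]
        congr 1
        omega
      rwa [hsj] at h
    have hsub2 : ∀ j, SpecLE (f (z2 j)) y3 := by
      intro j
      have h := hspec (2 * j + 1)
      have hsj : s (2 * j + 1) = z2 j := by
        simp only [hs]
        rw [if_neg (by simp [Nat.even_add_one, Nat.even_add_one, parity_simps])]
        congr 1
        omega
      rwa [hsj] at h
    exact ⟨y3, ⟨z3, hz3A, hz3E⟩, hseed z1 y3 hsub1 y1 hz1E, hseed z2 y3 hsub2 y2 hz2E⟩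
  have hDne : D.Nonempty := by
    obtain ⟨y, zz, hwit, _⟩ := key (fun _ => d0) (fun _ => hd0A)
    exact ⟨y, zz, hwit⟩
  -- final application of well-filteredness
  have hKDcs : ∀ K ∈ (fun y => WDup ({y} : Set Y)) '' D, IsCompact K ∧ SatUpper K := by
    rintro K ⟨y0, _, rfl⟩
    exact ⟨WD_isCompact_up isCompact_singleton, WD_satUpper_up _⟩
  have hKDfil : FilteredFam ((fun y => WDup ({y} : Set Y)) '' D) := by
    rintro K1 ⟨y1, hy1, rfl⟩ K2 ⟨y2, hy2, rfl⟩
    obtain ⟨y3, hy3, h13, h23⟩ := hDdir y1 hy1 y2 hy2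
    refine ⟨WDup {y3}, ⟨y3, hy3, rfl⟩, ?_⟩
    rintro w ⟨x, hx, hxw⟩
    have hx3 : x = y3 := hx
    subst hx3
    exact ⟨⟨y1, rfl, WD_specLE_trans h13 hxw⟩, ⟨y2, rfl, WD_specLE_trans h23 hxw⟩⟩
  have hKDmeet : ∀ K ∈ (fun y => WDup ({y} : Set Y)) '' D, (K ∩ closure (f '' A)).Nonempty := by
    rintro K ⟨y0, hy0, rfl⟩
    exact ⟨y0, WD_subset_up _ rfl, hDB y0 hy0⟩
  obtain ⟨yhat, hyhatB, hyhatI⟩ := WD_wf_meet hY (hDne.image _) hKDcs hKDfil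
    isClosed_closure hKDmeet
  refine ⟨yhat, subset_antisymm ?_
    (closure_minimal (Set.singleton_subset_iff.mpr hyhatB) isClosed_closure)⟩
  apply closure_minimal ?_ isClosed_closure
  rintro w ⟨a, ha, rfl⟩
  obtain ⟨ya, za, hwit, hspec⟩ := key (fun _ => a) (fun _ => ha)
  have h1 : SpecLE (f a) ya := hspec 0
  have h2 : SpecLE ya yhat := by
    have h := Set.mem_sInter.mp hyhatI (WDup {ya}) ⟨ya, ⟨za, hwit⟩, rfl⟩
    obtain ⟨x, hx, hxy⟩ := h
    have hxa : x = ya := hx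
    subst hxa
    exact hxy
  exact WD_specLE_trans h1 h2
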